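/- Let Γ be a group, H a complex Hilbert space, and σ : Γ × Γ → ℂ a function with |σ(γ,γ')| = 1 for all γ, γ', σ(γ,e) = σ(e,γ) = 1, and satisfying the cocycle relation σ(γ₁,γ₂)·σ(γ₁γ₂,γ₃) = σ(γ₁,γ₂γ₃)·σ(γ₂,γ₃). For each γ ∈ Γ let T^R_γ be the bounded operator on ℓ²(Γ;H) defined by (T^R_γ f)(γ') = σ(γ',γ)·f(γ'γ). Let A be a bounded operator on ℓ²(Γ;H) commuting with T^R_γ for every γ ∈ Γ, and define a(γ) : H → H by a(γ)v = (A(δ_e⊗v))(γ). Then each a(γ) is a bounded operator, and for every finitely supported f ∈ ℓ²(Γ;H) and every γ' ∈ Γ one has (Af)(γ') = Σ_{γ₁ ∈ supp f} conj(σ(γ'γ₁⁻¹, γ₁))·a(γ'γ₁⁻¹)(f(γ₁)). -/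

import Mathlib

lemma single_add' {Γ : Type*} [DecidableEq Γ] {H : Type*} [NormedAddCommGroup H]
    (i : Γ) (v w : H) :
    lp.single (E := fun _ : Γ => H) 2 i (v + w) =
      lp.single 2 i v + lp.single 2 i w := by
  refine lp.ext (funext fun j => ?_)
  by_cases h : j = i
  · subst h; simp [lp.single_apply_self, lp.coeFn_add]
  · simp [lp.single_apply_ne _ _ _ h, lp.coeFn_add]

/-- (Analogue of the structure Lemma for the commutant of the right twisted
translations.) Let `σ` be a unimodular multiplier on `Γ`, let `T^R_γ` be the right
twisted translations `(T^R_γ f)(γ') = σ(γ',γ) f(γ'γ)` on `ℓ²(Γ; H)`, and let `A` be a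
bounded operator commuting with all `T^R_γ`. Set `a(γ)v = (A(δ_e ⊗ v))(γ)`. Then each
`a(γ)` is a bounded operator and, for every finitely supported `f ∈ ℓ²(Γ; H)`,
`(Af)(γ') = Σ_{γ₁ ∈ supp f} conj(σ(γ'γ₁⁻¹, γ₁)) a(γ'γ₁⁻¹)(f(γ₁))`. -/
theorem commutant_structure {Γ : Type*} [Group Γ] [DecidableEq Γ] {H : Type*}
    [NormedAddCommGroup H] [InnerProductSpace ℂ H] [CompleteSpace H]
    (σ : Γ → Γ → ℂ)
    (hσabs : ∀ γ γ' : Γ, ‖σ γ γ'‖ = 1)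
    (hσunit : ∀ γ : Γ, σ γ 1 = 1 ∧ σ 1 γ = 1)
    (hσcoc : ∀ γ₁ γ₂ γ₃ : Γ, σ γ₁ γ₂ * σ (γ₁ * γ₂) γ₃ = σ γ₁ (γ₂ * γ₃) * σ γ₂ γ₃)
    (T : Γ → (lp (fun _ : Γ => H) 2 →L[ℂ] lp (fun _ : Γ => H) 2))
    (hTdef : ∀ (γ : Γ) (f : lp (fun _ : Γ => H) 2) (γ' : Γ),
      (T γ f) γ' = σ γ' γ • f (γ' * γ))
    (A : lp (fun _ : Γ => H) 2 →L[ℂ] lp (fun _ : Γ => H) 2)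
    (hcomm : ∀ γ : Γ, A.comp (T γ) = (T γ).comp A)
    (a : Γ → H → H)
    (hadef : ∀ (γ : Γ) (v : H), a γ v = (A (lp.single 2 (1 : Γ) v)) γ) :
    (∀ γ : Γ, ∃ b : H →L[ℂ] H, ∀ v : H, b v = a γ v) ∧
    (∀ (f : lp (fun _ : Γ => H) 2) (hf : (Function.support fun γ : Γ => f γ).Finite)
        (γ' : Γ),
      (A f) γ' = ∑ γ₁ ∈ hf.toFinset,
        (starRingEnd ℂ) (σ (γ' * γ₁⁻¹) γ₁) • a (γ' * γ₁⁻¹) (f γ₁)) := by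
  have hσne : ∀ γ γ' : Γ, σ γ γ' ≠ 0 := fun γ γ' => by
    intro h; have := hσabs γ γ'; rw [h] at this; simp at this
  -- conj of a modulus-one complex number is its inverse
  have hconj : ∀ γ γ' : Γ, (starRingEnd ℂ) (σ γ γ') = (σ γ γ')⁻¹ := by
    intro γ γ'
    have h1 : σ γ γ' * (starRingEnd ℂ) (σ γ γ') = 1 := by
      rw [Complex.mul_conj]
      norm_cast
      rw [Complex.normSq_eq_norm_sq, hσabs]; norm_num
    field_simp [hσne γ γ'] at h1 ⊢
    linear_combination h1
  -- a is linear and bounded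
  have ha_add : ∀ (γ : Γ) (v w : H), a γ (v + w) = a γ v + a γ w := by
    intro γ v w
    rw [hadef, hadef, hadef, single_add', map_add, lp.coeFn_add, Pi.add_apply]
  have ha_smul : ∀ (γ : Γ) (c : ℂ) (v : H), a γ (c • v) = c • a γ v := by
    intro γ c v
    rw [hadef, hadef, lp.single_smul, map_smul, lp.coeFn_smul, Pi.smul_apply]
  have ha_bdd : ∀ (γ : Γ) (v : H), ‖a γ v‖ ≤ ‖A‖ * ‖v‖ := by
    intro γ v
    rw [hadef]
    have h1 : ‖(A (lp.single 2 (1 : Γ) v)) γ‖ ≤ ‖A (lp.single 2 (1 : Γ) v)‖ :=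
      lp.norm_apply_le_norm (by norm_num : (2:ENNReal) ≠ 0) _ γ
    have h2 := A.le_opNorm (lp.single 2 (1 : Γ) v)
    have h3 : ‖lp.single (E := fun _ : Γ => H) 2 (1 : Γ) v‖ = ‖v‖ :=
      lp.norm_single (E := fun _ : Γ => H) (p := 2) (by norm_num : (0:ENNReal) < 2) (1 : Γ) v
    rw [h3] at h2
    exact h1.trans h2
  -- action of T on singles
  have hT_single : ∀ (γ γ₁ : Γ) (v : H),
      T γ (lp.single 2 γ₁ v) = lp.single 2 (γ₁ * γ⁻¹) (σ (γ₁ * γ⁻¹) γ • v) := by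
    intro γ γ₁ v
    refine lp.ext (funext fun γ' => ?_)
    rw [hTdef]
    by_cases h : γ' = γ₁ * γ⁻¹
    · subst h
      rw [lp.single_apply_self]
      have : γ₁ * γ⁻¹ * γ = γ₁ := by group
      rw [this, lp.single_apply_self]
    · rw [lp.single_apply_ne _ _ _ h, lp.single_apply_ne, smul_zero]
      intro hc
      exact h (by rw [← hc]; group)
  -- expressing a single at γ₁ via T γ₁⁻¹ applied to a single at 1
  have hsingle_T : ∀ (γ₁ : Γ) (v : H),
      lp.single (E := fun _ : Γ => H) 2 γ₁ v =
        T γ₁⁻¹ (lp.single 2 (1 : Γ) ((σ γ₁ γ₁⁻¹)⁻¹ • v)) := by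
    intro γ₁ v
    rw [hT_single]
    simp only [one_mul, inv_inv, smul_smul, mul_inv_cancel₀ (hσne γ₁ γ₁⁻¹), one_smul]
  -- key formula for A on singles
  have hA_single : ∀ (γ₁ : Γ) (v : H) (γ' : Γ),
      (A (lp.single 2 γ₁ v)) γ' =
        (starRingEnd ℂ) (σ (γ' * γ₁⁻¹) γ₁) • a (γ' * γ₁⁻¹) v := by
    intro γ₁ v γ'
    rw [hsingle_T]
    have := congrFun (congrArg (DFunLike.coe) (hcomm γ₁⁻¹))
      (lp.single 2 (1 : Γ) ((σ γ₁ γ₁⁻¹)⁻¹ • v))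
    simp only [ContinuousLinearMap.comp_apply] at this
    rw [this, hTdef, ← hadef, ha_smul, smul_smul]
    congr 1
    -- scalar identity: σ γ' γ₁⁻¹ * (σ γ₁ γ₁⁻¹)⁻¹ = conj (σ (γ' γ₁⁻¹) γ₁)
    have hc := hσcoc (γ' * γ₁⁻¹) γ₁ γ₁⁻¹
    have h1 : γ' * γ₁⁻¹ * γ₁ = γ' := by group
    have h2 : γ₁ * γ₁⁻¹ = (1 : Γ) := by group
    rw [h1, h2, (hσunit _).1, one_mul] at hc
    rw [hconj, ← hc, mul_inv]
    rw [mul_comm ((σ (γ' * γ₁⁻¹) γ₁)⁻¹) ((σ γ' γ₁⁻¹)⁻¹), ← mul_assoc,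
      mul_inv_cancel₀ (hσne γ' γ₁⁻¹), one_mul]
  constructor
  · intro γ
    refine ⟨LinearMap.mkContinuous
      { toFun := a γ
        map_add' := ha_add γ
        map_smul' := ha_smul γ } ‖A‖ (ha_bdd γ), fun v => rfl⟩
  · intro f hf γ'
    have hdecomp : f = ∑ γ₁ ∈ hf.toFinset, lp.single 2 γ₁ (f γ₁) := by
      refine lp.ext (funext fun j => ?_)
      rw [lp.coeFn_sum, Finset.sum_apply]
      by_cases hj : j ∈ hf.toFinset
      · have hz : ∀ b ∈ hf.toFinset, b ≠ j →
            (lp.single (E := fun _ : Γ => H) 2 b (f b) : ∀ _ : Γ, H) j = 0 := by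
          intro b _ hb; exact lp.single_apply_ne 2 b _ (Ne.symm hb)
        rw [Finset.sum_eq_single_of_mem j hj hz, lp.single_apply_self]
      · have hj0 : f j = 0 := by
          by_contra h
          exact hj (hf.mem_toFinset.mpr h)
        rw [hj0]
        refine (Finset.sum_eq_zero fun b hb => ?_).symm
        rcases eq_or_ne j b with rfl | hne
        · rw [lp.single_apply_self, hj0]
        · exact lp.single_apply_ne _ _ _ hne
    conv_lhs => rw [hdecomp]
    rw [map_sum, lp.coeFn_sum, Finset.sum_apply]
    exact Finset.sum_congr rfl fun γ₁ _ => hA_single γ₁ (f γ₁) γ'
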